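/- Let n ≥ 1 and let d : ℤ → ℤ be an n-periodic sequence of integers with d_i ≥ 2 for all i and d_j ≥ 3 for some j. Then there exists a unique n-periodic sequence of real numbers (ω_i)_{i∈ℤ} with ω_i > 1 for all i and ω_i = d_i − 1/ω_{i+1} for all i. Moreover each ω_i is irrational. -/

import Mathlib

open Filter Topology

/-- Finite truncations of the minus continued fraction, seeded with `d i`. -/
noncomputable def cfAux (d : ℤ → ℤ) : ℕ → ℤ → ℝ
  | 0, i => d i
  | (m+1), i => d i - 1 / cfAux d m (i+1)

/-- The limit sequence. -/
noncomputable def cfOmega (d : ℤ → ℤ) (i : ℤ) : ℝ := ⨅ m, cfAux d m i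

lemma cfAux_zero (d : ℤ → ℤ) (i : ℤ) : cfAux d 0 i = d i := rfl
lemma cfAux_succ (d : ℤ → ℤ) (m : ℕ) (i : ℤ) :
    cfAux d (m+1) i = d i - 1 / cfAux d m (i+1) := rfl

lemma cfAux_ge_one (d : ℤ → ℤ) (h2 : ∀ i, 2 ≤ d i) : ∀ m i, 1 ≤ cfAux d m i := by
  intro m
  induction m with
  | zero => intro i; have := h2 i; simp [cfAux]; exact_mod_cast by linarith
  | succ m ih =>
    intro i
    have h1 := ih (i+1)
    have hpos : (0:ℝ) < cfAux d m (i+1) := by linarith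
    have : 1 / cfAux d m (i+1) ≤ 1 := by rw [div_le_one hpos]; linarith
    have hd : (2:ℝ) ≤ d i := by exact_mod_cast h2 i
    rw [cfAux_succ]; linarith

lemma cfAux_anti (d : ℤ → ℤ) (h2 : ∀ i, 2 ≤ d i) : ∀ m i, cfAux d (m+1) i ≤ cfAux d m i := by
  intro m
  induction m with
  | zero =>
    intro i
    have h1 := cfAux_ge_one d h2 0 (i+1)
    have : 0 ≤ 1 / cfAux d 0 (i+1) := by positivity
    simp only [cfAux_zero] at *
    rw [show ((0:ℕ)+1) = 1 from rfl, cfAux_succ, cfAux_zero]; linarith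
  | succ m ih =>
    intro i
    have h1 := cfAux_ge_one d h2 (m+1) (i+1)
    have h2' := ih (i+1)
    have : 1 / cfAux d m (i+1) ≤ 1 / cfAux d (m+1) (i+1) :=
      one_div_le_one_div_of_le (by linarith) h2'
    rw [cfAux_succ d (m+1) i, cfAux_succ d m i]; linarith

lemma cfAux_tendsto (d : ℤ → ℤ) (h2 : ∀ i, 2 ≤ d i) (i : ℤ) :
    Tendsto (fun m => cfAux d m i) atTop (𝓝 (cfOmega d i)) :=
  tendsto_atTop_ciInf (antitone_nat_of_succ_le fun m => cfAux_anti d h2 m i)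
    ⟨1, by rintro x ⟨m, rfl⟩; exact cfAux_ge_one d h2 m i⟩

lemma cfOmega_ge_one (d : ℤ → ℤ) (h2 : ∀ i, 2 ≤ d i) (i : ℤ) : 1 ≤ cfOmega d i :=
  le_ciInf fun m => cfAux_ge_one d h2 m i

lemma cfOmega_rec (d : ℤ → ℤ) (h2 : ∀ i, 2 ≤ d i) (i : ℤ) :
    cfOmega d i = (d i : ℝ) - 1 / cfOmega d (i+1) := by
  have hne : cfOmega d (i+1) ≠ 0 := by
    have := cfOmega_ge_one d h2 (i+1); intro h; rw [h] at this; linarith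
  have h1 : Tendsto (fun m => cfAux d (m+1) i) atTop (𝓝 (cfOmega d i)) :=
    (cfAux_tendsto d h2 i).comp (tendsto_add_atTop_nat 1)
  have h2' : Tendsto (fun m => (d i : ℝ) - 1 / cfAux d m (i+1)) atTop
      (𝓝 ((d i : ℝ) - 1 / cfOmega d (i+1))) :=
    tendsto_const_nhds.sub (tendsto_const_nhds.div (cfAux_tendsto d h2 (i+1)) hne)
  exact tendsto_nhds_unique h1 (by simpa only [← cfAux_succ] using h2')

lemma cfAux_periodic (n : ℕ) (d : ℤ → ℤ) (hper : ∀ i : ℤ, d (i + n) = d i) :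
    ∀ m i, cfAux d m (i + n) = cfAux d m i := by
  intro m
  induction m with
  | zero => intro i; simp [cfAux_zero, hper]
  | succ m ih =>
    intro i
    have h1 : (i + n) + 1 = (i + 1) + n := by ring
    rw [cfAux_succ, cfAux_succ, hper, h1, ih]

lemma cfOmega_periodic (n : ℕ) (d : ℤ → ℤ) (hper : ∀ i : ℤ, d (i + n) = d i) (i : ℤ) :
    cfOmega d (i + n) = cfOmega d i := by
  unfold cfOmega
  exact iInf_congr fun m => cfAux_periodic n d hper m i

/-- Multi-step periodicity, in both directions. -/
lemma multi_per {α : Type*} (n : ℕ) (f : ℤ → α) (h : ∀ i : ℤ, f (i + n) = f i) :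
    ∀ (m : ℤ) (i : ℤ), f (i + n * m) = f i := by
  intro m
  induction m using Int.induction_on with
  | zero => simp
  | succ k ih =>
    intro i
    have h1 : i + n * ((k : ℤ) + 1) = (i + n * k) + n := by ring
    rw [h1, h, ih]
  | pred k ih =>
    intro i
    have h1 : (i + n * (-(k : ℤ) - 1)) + n = i + n * (-(k:ℤ)) := by ring
    have := h (i + n * (-(k : ℤ) - 1))
    rw [h1] at this
    rw [← this, ih]

section Abstract

variable (n : ℕ) (d : ℤ → ℤ)

/-- Any solution is ≥ 2 wherever `d ≥ 3`. -/
lemma sol_ge_two (ω : ℤ → ℝ) (hg : ∀ i, 1 ≤ ω i)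
    (hr : ∀ i, ω i = (d i : ℝ) - 1 / ω (i + 1)) (i : ℤ) (h3i : 3 ≤ d i) :
    2 ≤ ω i := by
  have h1 := hg (i+1)
  have hle : 1 / ω (i+1) ≤ 1 := by rw [div_le_one (by linarith)]; linarith
  have hd : (3:ℝ) ≤ d i := by exact_mod_cast h3i
  rw [hr i]; linarith

/-- Iterating backwards from an index with `d ≥ 3`, the solution stays ≥ 1 + 2⁻ᵏ. -/
lemma sol_pow_bound (ω : ℤ → ℝ) (hg : ∀ i, 1 ≤ ω i)
    (hr : ∀ i, ω i = (d i : ℝ) - 1 / ω (i + 1)) (h2 : ∀ i, 2 ≤ d i)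
    (j : ℤ) (h3j : 3 ≤ d j) :
    ∀ k : ℕ, 1 + (1/2:ℝ)^k ≤ ω (j - k) := by
  intro k
  induction k with
  | zero =>
    have := sol_ge_two d ω hg hr j h3j
    simpa using by norm_num; linarith
  | succ k ih =>
    set a : ℝ := (1/2:ℝ)^k with ha
    have hapos : 0 < a := by positivity
    have hale : a ≤ 1 := by
      rw [ha]; exact pow_le_one₀ (by norm_num) (by norm_num)
    have hstep : (j - (k+1:ℕ)) + 1 = j - k := by push_cast; ring
    have hrec := hr (j - (k+1:ℕ))
    rw [hstep] at hrec
    have hinv : 1 / ω (j - k) ≤ 1 / (1 + a) :=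
      one_div_le_one_div_of_le (by linarith) ih
    have hd : (2:ℝ) ≤ d (j - (k+1:ℕ)) := by exact_mod_cast h2 _
    have key : 1 / (1+a) ≤ 1 - a/2 := by
      rw [div_le_iff₀ (by linarith)]
      nlinarith [mul_nonneg hapos.le (sub_nonneg.2 hale)]
    have : (1/2:ℝ)^(k+1) = a/2 := by rw [ha]; ring
    rw [this, hrec]; linarith

/-- Any solution (with weak bound ≥ 1) is > 1 everywhere, given periodicity. -/
lemma sol_gt_one (hn : 1 ≤ n) (ω : ℤ → ℝ) (hp : ∀ i : ℤ, ω (i + n) = ω i)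
    (hg : ∀ i, 1 ≤ ω i) (hr : ∀ i, ω i = (d i : ℝ) - 1 / ω (i + 1))
    (h2 : ∀ i, 2 ≤ d i) (j : ℤ) (h3j : 3 ≤ d j) (i : ℤ) : 1 < ω i := by
  set m : ℤ := max (i - j) 0 with hm
  have hm0 : 0 ≤ m := le_max_right _ _
  have hmij : i - j ≤ m := le_max_left _ _
  have hnm : i - j ≤ n * m := by
    calc i - j ≤ m := hmij
    _ ≤ n * m := le_mul_of_one_le_left hm0 (by exact_mod_cast hn)
  set k : ℕ := (j - i + n * m).toNat with hk
  have hkval : (k : ℤ) = j - i + n * m := Int.toNat_of_nonneg (by linarith)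
  have hbd := sol_pow_bound d ω hg hr h2 j h3j k
  have hji : j - k = i + n * (-m) := by rw [hkval]; ring
  rw [hji, multi_per n ω hp (-m) i] at hbd
  have : (0:ℝ) < (1/2:ℝ)^k := by positivity
  linarith

/-- Uniqueness of periodic solutions. -/
lemma sol_unique (hn : 1 ≤ n) (h2 : ∀ i, 2 ≤ d i) (j : ℤ) (h3j : 3 ≤ d j)
    (ω ω' : ℤ → ℝ)
    (hp : ∀ i : ℤ, ω (i + n) = ω i) (hg : ∀ i, 1 < ω i)
    (hr : ∀ i, ω i = (d i : ℝ) - 1 / ω (i + 1))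
    (hp' : ∀ i : ℤ, ω' (i + n) = ω' i) (hg' : ∀ i, 1 < ω' i)
    (hr' : ∀ i, ω' i = (d i : ℝ) - 1 / ω' (i + 1)) :
    ω = ω' := by
  set δ : ℤ → ℝ := fun i => |ω i - ω' i| with hδ
  have hδper : ∀ i : ℤ, δ (i + n) = δ i := by
    intro i; simp only [hδ, hp, hp']
  have hne : ∀ i, ω i ≠ 0 := fun i => by have := hg i; intro h; rw [h] at this; linarith
  have hne' : ∀ i, ω' i ≠ 0 := fun i => by have := hg' i; intro h; rw [h] at this; linarith
  have hdiff : ∀ i, ω i - ω' i = (ω (i+1) - ω' (i+1)) / (ω (i+1) * ω' (i+1)) := by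
    intro i
    rw [hr i, hr' i]
    have a := hne (i+1); have b := hne' (i+1)
    field_simp
    ring
  have hδeq : ∀ i, δ i = δ (i+1) / (ω (i+1) * ω' (i+1)) := by
    intro i
    rw [hδ]
    simp only []
    rw [hdiff i, abs_div, abs_of_pos (by nlinarith [hg (i+1), hg' (i+1)] : (0:ℝ) < ω (i+1) * ω' (i+1))]
  have hδstep : ∀ i, δ i ≤ δ (i+1) := by
    intro i
    rw [hδeq i]
    exact div_le_self (abs_nonneg _) (by nlinarith [hg (i+1), hg' (i+1)])
  have hδmono : ∀ (k : ℕ) (i : ℤ), δ i ≤ δ (i + k) := by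
    intro k
    induction k with
    | zero => intro i; simp
    | succ k ih =>
      intro i
      calc δ i ≤ δ (i+1) := hδstep i
      _ ≤ δ (i+1+k) := ih (i+1)
      _ = δ (i + (k+1:ℕ)) := by push_cast; ring_nf
  have hω2 : 2 ≤ ω j := sol_ge_two d ω (fun i => (hg i).le) hr j h3j
  have hω2' : 2 ≤ ω' j := sol_ge_two d ω' (fun i => (hg' i).le) hr' j h3j
  have hcontr : δ (j-1) ≤ δ j / 4 := by
    have := hδeq (j-1)
    rw [show j - 1 + 1 = j by ring] at this
    rw [this]
    apply div_le_div_of_nonneg_left (abs_nonneg _) (by norm_num)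
    nlinarith
  have hjm : δ j ≤ δ (j - 1) := by
    have h1 : δ j ≤ δ (j + (n-1:ℕ)) := hδmono (n-1) j
    have h2' : (((n-1:ℕ)):ℤ) = (n:ℤ) - 1 := by
      have : (1:ℕ) ≤ n := hn; omega
    rw [h2'] at h1
    have h3' : j + ((n:ℤ) - 1) = (j - 1) + n := by ring
    rw [h3', hδper] at h1
    exact h1
  have hδj : δ j = 0 := by
    have h0 : 0 ≤ δ j := abs_nonneg _
    linarith
  funext i
  have : δ i = 0 := by
    set m : ℤ := max (i - j) 0 with hm
    have hm0 : 0 ≤ m := le_max_right _ _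
    have hnm : i - j ≤ n * m := by
      calc i - j ≤ m := le_max_left _ _
      _ ≤ n * m := le_mul_of_one_le_left hm0 (by exact_mod_cast hn)
    set k : ℕ := (j - i + n * m).toNat with hk
    have hkval : (k : ℤ) = j - i + n * m := Int.toNat_of_nonneg (by linarith)
    have h1 : δ i ≤ δ (i + k) := hδmono k i
    have h2'' : i + (k:ℤ) = j + n * m := by rw [hkval]; ring
    rw [h2'', multi_per n δ hδper m j, hδj] at h1
    have h0 : 0 ≤ δ i := abs_nonneg _
    linarith
  have := abs_eq_zero.mp this
  linarith [sub_eq_zero.mp this]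

end Abstract

/-- No solution value is rational: infinite descent on denominators. -/
lemma sol_no_rat (d : ℤ → ℤ) (ω : ℤ → ℝ) (hg : ∀ i, 1 < ω i)
    (hr : ∀ i, ω i = (d i : ℝ) - 1 / ω (i + 1)) :
    ∀ (q : ℕ) (i : ℤ) (p : ℤ), 0 < q → ω i = (p : ℝ) / (q : ℝ) → False := by
  intro q
  induction q using Nat.strong_induction_on with
  | _ q ih =>
    intro i p hq hpq
    have hqR : (0:ℝ) < (q:ℝ) := by exact_mod_cast hq
    have hx := hg (i+1)
    have hxpos : (0:ℝ) < ω (i+1) := by linarith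
    have h1 : 1 / ω (i+1) = (d i : ℝ) - (p:ℝ)/(q:ℝ) := by
      have := hr i; rw [hpq] at this; linarith
    set q' : ℤ := d i * q - p with hq'
    have hq'cast : ((q':ℤ):ℝ) = (d i : ℝ) * q - p := by rw [hq']; push_cast; ring
    have h2 : 1 / ω (i+1) = (q':ℝ) / (q:ℝ) := by
      rw [h1, hq'cast]; field_simp
    have h01 : 0 < 1 / ω (i+1) := by positivity
    have hlt1 : 1 / ω (i+1) < 1 := by rw [div_lt_one hxpos]; linarith
    have hq'pos : (0:ℝ) < (q':ℝ) := by
      by_contra h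
      push_neg at h
      rw [h2] at h01
      linarith [div_nonpos_of_nonpos_of_nonneg h hqR.le]
    have hq'lt : (q':ℝ) < (q:ℝ) := by
      have := hlt1; rw [h2, div_lt_one hqR] at this; exact this
    have hq'posZ : 0 < q' := by exact_mod_cast hq'pos
    have hq'ltZ : q' < (q:ℤ) := by exact_mod_cast hq'lt
    have hωi1 : ω (i+1) = (q:ℝ) / (q':ℝ) := by
      rw [eq_div_iff (ne_of_gt hq'pos)]
      have h3 : (1 / ω (i+1)) * ω (i+1) = 1 := by field_simp
      rw [h2] at h3
      field_simp at h3
      linarith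
    have hlt : q'.toNat < q := by omega
    have hcast : ((q'.toNat : ℕ) : ℝ) = (q' : ℝ) := by
      exact_mod_cast Int.toNat_of_nonneg hq'posZ.le
    exact ih q'.toNat hlt (i+1) q (by omega) (by rw [hωi1, hcast]; push_cast; ring)

lemma sol_irrational (d : ℤ → ℤ) (ω : ℤ → ℝ) (hg : ∀ i, 1 < ω i)
    (hr : ∀ i, ω i = (d i : ℝ) - 1 / ω (i + 1)) (i : ℤ) : Irrational (ω i) := by
  rintro ⟨r, hri⟩
  apply sol_no_rat d ω hg hr r.den i r.num r.pos
  rw [← hri, Rat.cast_def]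

/-- For an `n`-periodic integer sequence `d` with all `dᵢ ≥ 2` and some `d_j ≥ 3`,
there is a unique `n`-periodic real sequence `ω` with `ωᵢ > 1` and
`ωᵢ = dᵢ − 1/ω_{i+1}` for all `i`; moreover every `ωᵢ` is irrational. -/
theorem periodic_minus_continued_fraction_exists_unique_irrational
    (n : ℕ) (hn : 1 ≤ n) (d : ℤ → ℤ)
    (hper : ∀ i : ℤ, d (i + n) = d i) (h2 : ∀ i, 2 ≤ d i) (h3 : ∃ j, 3 ≤ d j) :
    (∃! ω : ℤ → ℝ,
      (∀ i : ℤ, ω (i + n) = ω i) ∧ (∀ i, 1 < ω i) ∧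
        ∀ i, ω i = (d i : ℝ) - 1 / ω (i + 1)) ∧
    ∀ ω : ℤ → ℝ,
      ((∀ i : ℤ, ω (i + n) = ω i) ∧ (∀ i, 1 < ω i) ∧
        ∀ i, ω i = (d i : ℝ) - 1 / ω (i + 1)) →
      ∀ i, Irrational (ω i) := by
  obtain ⟨j, h3j⟩ := h3
  constructor
  · refine ⟨cfOmega d, ⟨fun i => cfOmega_periodic n d hper i,
      fun i => sol_gt_one n d hn (cfOmega d) (fun i => cfOmega_periodic n d hper i)
        (fun i => cfOmega_ge_one d h2 i) (fun i => cfOmega_rec d h2 i) h2 j h3j i,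
      fun i => cfOmega_rec d h2 i⟩, ?_⟩
    rintro ω' ⟨hp', hg', hr'⟩
    exact sol_unique n d hn h2 j h3j ω' (cfOmega d) hp' hg' hr'
      (fun i => cfOmega_periodic n d hper i)
      (fun i => sol_gt_one n d hn (cfOmega d) (fun i => cfOmega_periodic n d hper i)
        (fun i => cfOmega_ge_one d h2 i) (fun i => cfOmega_rec d h2 i) h2 j h3j i)
      (fun i => cfOmega_rec d h2 i)
  · rintro ω ⟨_, hg, hr⟩ i
    exact sol_irrational d ω hg hr i
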